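/- (Corollary 1) In the covariance-steering setup with the constrained range-control problem data, suppose ξ* = (ξ*_1,…,ξ*_{N_x}, η*_0,…,η*_{N−1}) has nonnegative entries, K* is a feasible gain sequence satisfying complementary slackness with ξ*, K* minimizes K ↦ L(K, ξ*) over all gain sequences, and 𝓡_k + η*_k > 0 for every k. Set Q* = a aᵀ + Σ_i ξ*_i d_i d_iᵀ and R*_k = 𝓡_k + η*_k, and let (K̂_k) be the gain sequence produced by the backward Riccati recursion S_N = Q*, c_k = R*_k + B_kᵀ S_{k+1} B_k, K̂_k = −c_k⁻¹ B_kᵀ S_{k+1} A_k, S_k = A_kᵀ S_{k+1} A_k − c_k K̂_kᵀ K̂_k. Then J_LQ(K*; Q*, R*) = J_LQ(K̂; Q*, R*) = tr(S_0 P_0) + Σ_{k=0}^{N−1} tr(S_{k+1} G_k G_kᵀ); that is, the constrained-optimal gain K* attains the same LQ cost as the Riccati gains for the weights (Q*, R*), so the constrained problem can be solved by optimizing over the LQ weights with gains given by the Riccati recursion. -/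

import Mathlib

open Matrix Finset

noncomputable section

/-- Closed-loop covariance recursion `P_{k+1} = (A_k + B_k K_k) P_k (A_k + B_k K_k)ᵀ + G_k G_kᵀ`. -/
def Pseq {n m : ℕ} (A : ℕ → Matrix (Fin n) (Fin n) ℝ) (B : ℕ → Matrix (Fin n) (Fin 1) ℝ)
    (G : ℕ → Matrix (Fin n) (Fin m) ℝ) (P0 : Matrix (Fin n) (Fin n) ℝ)
    (K : ℕ → Matrix (Fin 1) (Fin n) ℝ) : ℕ → Matrix (Fin n) (Fin n) ℝ
  | 0 => P0
  | k + 1 => (A k + B k * K k) * Pseq A B G P0 K k * (A k + B k * K k)ᵀ + G k * (G k)ᵀ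

/-- The scalar closed-loop control variance `K_k P_k K_kᵀ`. -/
def ctrlVar {n m : ℕ} (A : ℕ → Matrix (Fin n) (Fin n) ℝ) (B : ℕ → Matrix (Fin n) (Fin 1) ℝ)
    (G : ℕ → Matrix (Fin n) (Fin m) ℝ) (P0 : Matrix (Fin n) (Fin n) ℝ)
    (K : ℕ → Matrix (Fin 1) (Fin n) ℝ) (k : ℕ) : ℝ :=
  (K k * Pseq A B G P0 K k * (K k)ᵀ) 0 0

/-- LQ cost `J_LQ(K; Q, R) = tr(Q P_N) + Σ_{k<N} R_k · (K_k P_k K_kᵀ)`. -/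
def JLQ {n m : ℕ} (N : ℕ) (A : ℕ → Matrix (Fin n) (Fin n) ℝ) (B : ℕ → Matrix (Fin n) (Fin 1) ℝ)
    (G : ℕ → Matrix (Fin n) (Fin m) ℝ) (P0 : Matrix (Fin n) (Fin n) ℝ)
    (Q : Matrix (Fin n) (Fin n) ℝ) (R : ℕ → ℝ) (K : ℕ → Matrix (Fin 1) (Fin n) ℝ) : ℝ :=
  (Q * Pseq A B G P0 K N).trace + ∑ k ∈ range N, R k * ctrlVar A B G P0 K k

/-- Range-control cost `J(K) = aᵀ P_N a + Σ_{k<N} 𝓡_k · (K_k P_k K_kᵀ)`. -/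
def Jcost {n m : ℕ} (N : ℕ) (A : ℕ → Matrix (Fin n) (Fin n) ℝ) (B : ℕ → Matrix (Fin n) (Fin 1) ℝ)
    (G : ℕ → Matrix (Fin n) (Fin m) ℝ) (P0 : Matrix (Fin n) (Fin n) ℝ)
    (a : Fin n → ℝ) (𝓡 : ℕ → ℝ) (K : ℕ → Matrix (Fin 1) (Fin n) ℝ) : ℝ :=
  a ⬝ᵥ (Pseq A B G P0 K N).mulVec a + ∑ k ∈ range N, 𝓡 k * ctrlVar A B G P0 K k

/-- Lagrangian of the constrained range-control problem, with state multipliers `ξ` and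
control multipliers `η`. -/
def Lagr {n m : ℕ} (N Nx : ℕ) (A : ℕ → Matrix (Fin n) (Fin n) ℝ)
    (B : ℕ → Matrix (Fin n) (Fin 1) ℝ) (G : ℕ → Matrix (Fin n) (Fin m) ℝ)
    (P0 : Matrix (Fin n) (Fin n) ℝ) (a : Fin n → ℝ) (𝓡 : ℕ → ℝ)
    (d : ℕ → Fin n → ℝ) (𝒟 𝒰 : ℕ → ℝ)
    (K : ℕ → Matrix (Fin 1) (Fin n) ℝ) (ξ η : ℕ → ℝ) : ℝ :=
  Jcost N A B G P0 a 𝓡 K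
    + ∑ i ∈ range Nx, ξ i * (d i ⬝ᵥ (Pseq A B G P0 K N).mulVec (d i) - 𝒟 i ^ 2)
    + ∑ k ∈ range N, η k * (ctrlVar A B G P0 K k - 𝒰 k ^ 2)


/-- Feasibility for the constrained range-control problem. -/
def Feasible {n m : ℕ} (N Nx : ℕ) (A : ℕ → Matrix (Fin n) (Fin n) ℝ)
    (B : ℕ → Matrix (Fin n) (Fin 1) ℝ) (G : ℕ → Matrix (Fin n) (Fin m) ℝ)
    (P0 : Matrix (Fin n) (Fin n) ℝ) (d : ℕ → Fin n → ℝ) (𝒟 𝒰 : ℕ → ℝ)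
    (K : ℕ → Matrix (Fin 1) (Fin n) ℝ) : Prop :=
  (∀ i < Nx, d i ⬝ᵥ (Pseq A B G P0 K N).mulVec (d i) ≤ 𝒟 i ^ 2) ∧
  (∀ k < N, ctrlVar A B G P0 K k ≤ 𝒰 k ^ 2)

/-- Backward Riccati recursion, indexed by the number `j` of steps taken backward from the final
index `N` (so `Srev j` is `S_{N-j}`): `S_N = Q` and, for `k = N-1,…,0`,
`c_k = R_k + B_kᵀ S_{k+1} B_k`, `K̂_k = −c_k⁻¹ B_kᵀ S_{k+1} A_k`,
`S_k = A_kᵀ S_{k+1} A_k − c_k K̂_kᵀ K̂_k`. -/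
def Srev {n : ℕ} (A : ℕ → Matrix (Fin n) (Fin n) ℝ) (B : ℕ → Matrix (Fin n) (Fin 1) ℝ)
    (Q : Matrix (Fin n) (Fin n) ℝ) (R : ℕ → ℝ) (N : ℕ) : ℕ → Matrix (Fin n) (Fin n) ℝ
  | 0 => Q
  | j + 1 =>
      let k := N - (j + 1)
      let S := Srev A B Q R N j
      let c := R k + ((B k)ᵀ * S * B k) 0 0
      let Kh := (-c⁻¹) • ((B k)ᵀ * S * A k)
      (A k)ᵀ * S * A k - c • (Khᵀ * Kh)

/-- The Riccati iterate `S_k`, for `0 ≤ k ≤ N`. -/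
def Smat {n : ℕ} (A : ℕ → Matrix (Fin n) (Fin n) ℝ) (B : ℕ → Matrix (Fin n) (Fin 1) ℝ)
    (Q : Matrix (Fin n) (Fin n) ℝ) (R : ℕ → ℝ) (N k : ℕ) : Matrix (Fin n) (Fin n) ℝ :=
  Srev A B Q R N (N - k)

/-- The scalar `c_k = R_k + B_kᵀ S_{k+1} B_k`. -/
def cval {n : ℕ} (A : ℕ → Matrix (Fin n) (Fin n) ℝ) (B : ℕ → Matrix (Fin n) (Fin 1) ℝ)
    (Q : Matrix (Fin n) (Fin n) ℝ) (R : ℕ → ℝ) (N k : ℕ) : ℝ :=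
  R k + ((B k)ᵀ * Smat A B Q R N (k + 1) * B k) 0 0

/-- The optimal LQ (Riccati) gain `K̂_k = −c_k⁻¹ B_kᵀ S_{k+1} A_k`. -/
def Khat {n : ℕ} (A : ℕ → Matrix (Fin n) (Fin n) ℝ) (B : ℕ → Matrix (Fin n) (Fin 1) ℝ)
    (Q : Matrix (Fin n) (Fin n) ℝ) (R : ℕ → ℝ) (N k : ℕ) : Matrix (Fin 1) (Fin n) ℝ :=
  (-(cval A B Q R N k)⁻¹) • ((B k)ᵀ * Smat A B Q R N (k + 1) * A k)

noncomputable section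

theorem quadEntry {n : ℕ} (P : Matrix (Fin n) (Fin n) ℝ) (K : Matrix (Fin 1) (Fin n) ℝ) :
    (K * P * Kᵀ) 0 0 = (K 0) ⬝ᵥ P *ᵥ (K 0) := by
  simp only [mul_apply, mulVec, dotProduct, transpose_apply, Finset.sum_mul, Finset.mul_sum]
  rw [Finset.sum_comm]
  exact Finset.sum_congr rfl fun i _ => Finset.sum_congr rfl fun j _ => by ring

theorem psd_quad {n : ℕ} {P : Matrix (Fin n) (Fin n) ℝ} (hP : P.PosSemidef) (x : Fin n → ℝ) :
    0 ≤ x ⬝ᵥ P *ᵥ x := by simpa using hP.dotProduct_mulVec_nonneg x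

theorem quadEntry_nonneg {n : ℕ} {P : Matrix (Fin n) (Fin n) ℝ} (hP : P.PosSemidef)
    (K : Matrix (Fin 1) (Fin n) ℝ) : 0 ≤ (K * P * Kᵀ) 0 0 := by
  rw [quadEntry]; exact psd_quad hP _

theorem sandwich {n : ℕ} (X : Matrix (Fin 1) (Fin 1) ℝ) (K : Matrix (Fin 1) (Fin n) ℝ) :
    Kᵀ * X * K = X 0 0 • (Kᵀ * K) := by
  have hX : X = X 0 0 • (1 : Matrix (Fin 1) (Fin 1) ℝ) := by
    ext i j; fin_cases i; fin_cases j; simp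
  rw [hX]; simp [Matrix.mul_smul, Matrix.smul_mul]

theorem trace_vecMulVec {n : ℕ} (a : Fin n → ℝ) (P : Matrix (Fin n) (Fin n) ℝ) :
    (vecMulVec a a * P).trace = a ⬝ᵥ P *ᵥ a := by
  simp only [Matrix.trace, Matrix.diag, mul_apply, vecMulVec_apply, dotProduct, mulVec,
    Finset.mul_sum]
  rw [Finset.sum_comm]
  exact Finset.sum_congr rfl fun i _ => Finset.sum_congr rfl fun j _ => by ring

theorem psd_vecMulVec {n : ℕ} (a : Fin n → ℝ) : (vecMulVec a a).PosSemidef := by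
  rw [posSemidef_iff_dotProduct_mulVec]
  constructor
  · ext i j; simp [vecMulVec_apply, mul_comm]
  · intro x
    have h : x ⬝ᵥ (vecMulVec a a) *ᵥ x = (a ⬝ᵥ x) * (a ⬝ᵥ x) := by
      simp only [dotProduct, mulVec, vecMulVec_apply, Finset.mul_sum, Finset.sum_mul]
      rw [Finset.sum_comm]
      exact Finset.sum_congr rfl fun i _ => Finset.sum_congr rfl fun j _ => by ring
    simpa [h] using mul_self_nonneg (a ⬝ᵥ x)

theorem psd_smul {n : ℕ} {M : Matrix (Fin n) (Fin n) ℝ} (hM : M.PosSemidef) {ξ : ℝ}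
    (hξ : 0 ≤ ξ) : (ξ • M).PosSemidef := by
  refine PosSemidef.of_dotProduct_mulVec_nonneg ?_ fun x => ?_
  · unfold Matrix.IsHermitian
    rw [conjTranspose_smul, hM.1.eq]; simp
  · rw [smul_mulVec, dotProduct_smul]
    exact mul_nonneg hξ (by simpa using hM.dotProduct_mulVec_nonneg x)

theorem psd_sum {n : ℕ} {ι : Type*} (s : Finset ι) (f : ι → Matrix (Fin n) (Fin n) ℝ)
    (h : ∀ i ∈ s, (f i).PosSemidef) : (∑ i ∈ s, f i).PosSemidef :=
  Finset.sum_induction f _ (fun _ _ ha hb => ha.add hb) Matrix.PosSemidef.zero h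

-- transpose version of mul_mul_conjTranspose_same
theorem psd_conj {n p : ℕ} {S : Matrix (Fin n) (Fin n) ℝ} (hS : S.PosSemidef)
    (M : Matrix (Fin n) (Fin p) ℝ) : (Mᵀ * S * M).PosSemidef := by
  have := hS.conjTranspose_mul_mul_same M
  rwa [conjTranspose_eq_transpose_of_trivial] at this

theorem psd_mul_transpose {n p : ℕ} (M : Matrix (Fin n) (Fin p) ℝ) :
    (M * Mᵀ).PosSemidef := by
  have := posSemidef_self_mul_conjTranspose M
  rwa [conjTranspose_eq_transpose_of_trivial] at this

theorem psd_transpose_mul {n p : ℕ} (M : Matrix (Fin p) (Fin n) ℝ) :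
    (Mᵀ * M).PosSemidef := by
  have := posSemidef_conjTranspose_mul_self M
  rwa [conjTranspose_eq_transpose_of_trivial] at this

theorem cos_matrix {n : ℕ} (S A : Matrix (Fin n) (Fin n) ℝ) (B : Matrix (Fin n) (Fin 1) ℝ)
    (K : Matrix (Fin 1) (Fin n) ℝ) (R c : ℝ) (hS : Sᵀ = S)
    (hc : c = R + (Bᵀ * S * B) 0 0) (hc0 : c ≠ 0) :
    (A + B * K)ᵀ * S * (A + B * K) + R • (Kᵀ * K)
      = (Aᵀ * S * A - c • (((-c⁻¹) • (Bᵀ * S * A))ᵀ * ((-c⁻¹) • (Bᵀ * S * A))))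
        + c • ((K - (-c⁻¹) • (Bᵀ * S * A))ᵀ * (K - (-c⁻¹) • (Bᵀ * S * A))) := by
  have hWt : Aᵀ * S * B = (Bᵀ * S * A)ᵀ := by
    simp [Matrix.transpose_mul, hS, Matrix.mul_assoc]
  have expand : (A + B * K)ᵀ * S * (A + B * K)
      = Aᵀ * S * A + (Aᵀ * S * B) * K + Kᵀ * (Bᵀ * S * A) + Kᵀ * (Bᵀ * S * B) * K := by
    rw [transpose_add, Matrix.transpose_mul]
    simp only [Matrix.add_mul, Matrix.mul_add, Matrix.mul_assoc]; abel
  rw [expand, sandwich, hWt]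
  set W := Bᵀ * S * A with hW
  have hs : (Bᵀ * S * B) 0 0 = c - R := by rw [hc]; ring
  rw [hs, sub_eq_add_neg]
  simp only [transpose_sub, transpose_smul, Matrix.sub_mul, Matrix.mul_sub,
    Matrix.smul_mul, Matrix.mul_smul, transpose_smul, smul_smul]
  match_scalars <;> field_simp <;> ring

-- trace conjugation
theorem trace_conj {n p : ℕ} (S : Matrix (Fin p) (Fin p) ℝ) (M : Matrix (Fin p) (Fin n) ℝ)
    (P : Matrix (Fin n) (Fin n) ℝ) :
    (S * (M * P * Mᵀ)).trace = ((Mᵀ * S * M) * P).trace := by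
  have h1 : S * (M * P * Mᵀ) = (S * M * P) * Mᵀ := by simp [Matrix.mul_assoc]
  have h2 : Mᵀ * (S * M * P) = (Mᵀ * S * M) * P := by simp [Matrix.mul_assoc]
  rw [h1, trace_mul_comm, h2]
theorem psd_symm {n : ℕ} {S : Matrix (Fin n) (Fin n) ℝ} (hS : S.PosSemidef) : Sᵀ = S := by
  have := hS.1
  rwa [Matrix.IsHermitian, conjTranspose_eq_transpose_of_trivial] at this

theorem Smat_last {n : ℕ} (A : ℕ → Matrix (Fin n) (Fin n) ℝ) (B : ℕ → Matrix (Fin n) (Fin 1) ℝ)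
    (Q : Matrix (Fin n) (Fin n) ℝ) (R : ℕ → ℝ) (N : ℕ) : Smat A B Q R N N = Q := by
  simp [Smat, Srev]

theorem Smat_succ {n : ℕ} (A : ℕ → Matrix (Fin n) (Fin n) ℝ) (B : ℕ → Matrix (Fin n) (Fin 1) ℝ)
    (Q : Matrix (Fin n) (Fin n) ℝ) (R : ℕ → ℝ) {N k : ℕ} (hk : k < N) :
    Smat A B Q R N k = (A k)ᵀ * Smat A B Q R N (k + 1) * A k
      - (cval A B Q R N k) • ((Khat A B Q R N k)ᵀ * Khat A B Q R N k) := by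
  have h1 : N - k = (N - (k + 1)) + 1 := by omega
  have h2 : N - ((N - (k + 1)) + 1) = k := by omega
  rw [Smat, h1, Srev, h2]
  rfl

theorem Srev_psd {n : ℕ} (A : ℕ → Matrix (Fin n) (Fin n) ℝ) (B : ℕ → Matrix (Fin n) (Fin 1) ℝ)
    (Q : Matrix (Fin n) (Fin n) ℝ) (R : ℕ → ℝ) (N : ℕ) (hQ : Q.PosSemidef)
    (hR : ∀ k < N, 0 < R k) : ∀ j, j ≤ N → (Srev A B Q R N j).PosSemidef := by
  intro j
  induction j with
  | zero => intro _; exact hQ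
  | succ j ih =>
    intro hj
    have hS : (Srev A B Q R N j).PosSemidef := ih (by omega)
    set k := N - (j + 1) with hkdef
    have hk : k < N := by omega
    set S := Srev A B Q R N j with hSdef
    set c : ℝ := R k + ((B k)ᵀ * S * B k) 0 0 with hcdef
    have hs0 : 0 ≤ ((B k)ᵀ * S * B k) 0 0 := by
      have := quadEntry_nonneg hS (B k)ᵀ
      rwa [transpose_transpose] at this
    have hc : 0 < c := add_pos_of_pos_of_nonneg (hR k hk) hs0
    have goal_eq : Srev A B Q R N (j + 1)
        = (A k)ᵀ * S * A k - c • ((((-c⁻¹) • ((B k)ᵀ * S * A k))ᵀ)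
            * ((-c⁻¹) • ((B k)ᵀ * S * A k))) := rfl
    have key := cos_matrix S (A k) (B k) ((-c⁻¹) • ((B k)ᵀ * S * A k)) (R k) c
      (psd_symm hS) hcdef (ne_of_gt hc)
    rw [sub_self] at key
    simp only [transpose_zero, Matrix.mul_zero, Matrix.zero_mul, smul_zero, add_zero] at key
    rw [goal_eq, ← key]
    exact ((psd_conj hS _).add
      (psd_smul (psd_transpose_mul ((-c⁻¹) • ((B k)ᵀ * S * A k))) (le_of_lt (hR k hk))))

theorem Smat_psd {n : ℕ} (A : ℕ → Matrix (Fin n) (Fin n) ℝ) (B : ℕ → Matrix (Fin n) (Fin 1) ℝ)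
    (Q : Matrix (Fin n) (Fin n) ℝ) (R : ℕ → ℝ) {N k : ℕ} (hQ : Q.PosSemidef)
    (hR : ∀ k < N, 0 < R k) (hk : k ≤ N) : (Smat A B Q R N k).PosSemidef :=
  Srev_psd A B Q R N hQ hR (N - k) (by omega)

theorem cval_pos {n : ℕ} (A : ℕ → Matrix (Fin n) (Fin n) ℝ) (B : ℕ → Matrix (Fin n) (Fin 1) ℝ)
    (Q : Matrix (Fin n) (Fin n) ℝ) (R : ℕ → ℝ) {N k : ℕ} (hQ : Q.PosSemidef)
    (hR : ∀ k < N, 0 < R k) (hk : k < N) : 0 < cval A B Q R N k := by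
  have hS : (Smat A B Q R N (k + 1)).PosSemidef := Smat_psd A B Q R hQ hR (by omega)
  have hs0 : 0 ≤ ((B k)ᵀ * Smat A B Q R N (k + 1) * B k) 0 0 := by
    have := quadEntry_nonneg hS (B k)ᵀ
    rwa [transpose_transpose] at this
  exact add_pos_of_pos_of_nonneg (hR k hk) hs0

theorem Pseq_psd {n m : ℕ} (A : ℕ → Matrix (Fin n) (Fin n) ℝ) (B : ℕ → Matrix (Fin n) (Fin 1) ℝ)
    (G : ℕ → Matrix (Fin n) (Fin m) ℝ) (P0 : Matrix (Fin n) (Fin n) ℝ) (hP0 : P0.PosSemidef)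
    (K : ℕ → Matrix (Fin 1) (Fin n) ℝ) : ∀ k, (Pseq A B G P0 K k).PosSemidef := by
  intro k
  induction k with
  | zero => exact hP0
  | succ k ih =>
    show ((A k + B k * K k) * Pseq A B G P0 K k * (A k + B k * K k)ᵀ
        + G k * (G k)ᵀ).PosSemidef
    have h1 := psd_conj ih (A k + B k * K k)ᵀ
    rw [transpose_transpose] at h1
    exact h1.add (psd_mul_transpose (G k))
theorem trace_entry {P : Matrix (Fin 1) (Fin 1) ℝ} : P.trace = P 0 0 := trace_fin_one P

theorem step_trace {n m : ℕ} (A : ℕ → Matrix (Fin n) (Fin n) ℝ)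
    (B : ℕ → Matrix (Fin n) (Fin 1) ℝ) (G : ℕ → Matrix (Fin n) (Fin m) ℝ)
    (P0 : Matrix (Fin n) (Fin n) ℝ) (Q : Matrix (Fin n) (Fin n) ℝ) (R : ℕ → ℝ)
    (hQ : Q.PosSemidef) {N k : ℕ} (hR : ∀ k < N, 0 < R k) (hk : k < N)
    (K : ℕ → Matrix (Fin 1) (Fin n) ℝ) :
    (Smat A B Q R N (k + 1) * Pseq A B G P0 K (k + 1)).trace + R k * ctrlVar A B G P0 K k
      = (Smat A B Q R N k * Pseq A B G P0 K k).trace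
        + (Smat A B Q R N (k + 1) * (G k * (G k)ᵀ)).trace
        + cval A B Q R N k
            * ((K k - Khat A B Q R N k) * Pseq A B G P0 K k
                * (K k - Khat A B Q R N k)ᵀ) 0 0 := by
  set S := Smat A B Q R N (k + 1) with hSdef
  set P := Pseq A B G P0 K k with hPdef
  set M := A k + B k * K k with hMdef
  have hSymm : Sᵀ = S := psd_symm (Smat_psd A B Q R hQ hR (by omega))
  have hc0 : cval A B Q R N k ≠ 0 := ne_of_gt (cval_pos A B Q R hQ hR hk)
  have hPk1 : Pseq A B G P0 K (k + 1) = M * P * Mᵀ + G k * (G k)ᵀ := rfl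
  rw [hPk1, Matrix.mul_add, trace_add, trace_conj]
  have hctrl : R k * ctrlVar A B G P0 K k = ((R k • ((K k)ᵀ * K k)) * P).trace := by
    have e1 : ((K k)ᵀ * K k * P).trace = (K k * P * (K k)ᵀ).trace := by
      rw [Matrix.mul_assoc, trace_mul_comm, Matrix.mul_assoc]
    rw [Matrix.smul_mul, trace_smul, smul_eq_mul, e1, trace_fin_one]
    rfl
  have hresid : (((cval A B Q R N k) • ((K k - Khat A B Q R N k)ᵀ * (K k - Khat A B Q R N k)))
      * P).trace
      = cval A B Q R N k * ((K k - Khat A B Q R N k) * P * (K k - Khat A B Q R N k)ᵀ) 0 0 := by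
    have e1 : ((K k - Khat A B Q R N k)ᵀ * (K k - Khat A B Q R N k) * P).trace
        = ((K k - Khat A B Q R N k) * P * (K k - Khat A B Q R N k)ᵀ).trace := by
      rw [Matrix.mul_assoc, trace_mul_comm, Matrix.mul_assoc]
    rw [Matrix.smul_mul, trace_smul, smul_eq_mul, e1, trace_fin_one]
  have key := cos_matrix S (A k) (B k) (K k) (R k) (cval A B Q R N k) hSymm
    (by rw [cval, hSdef]) hc0
  have hKh : Khat A B Q R N k = (-(cval A B Q R N k)⁻¹) • ((B k)ᵀ * S * A k) := rfl
  calc (Mᵀ * S * M * P).trace + (S * (G k * (G k)ᵀ)).trace + R k * ctrlVar A B G P0 K k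
      = ((Mᵀ * S * M + R k • ((K k)ᵀ * K k)) * P).trace + (S * (G k * (G k)ᵀ)).trace := by
        rw [hctrl, Matrix.add_mul, trace_add]; ring
    _ = (((A k)ᵀ * S * A k
            - cval A B Q R N k • ((Khat A B Q R N k)ᵀ * Khat A B Q R N k)) * P).trace
          + ((cval A B Q R N k • ((K k - Khat A B Q R N k)ᵀ * (K k - Khat A B Q R N k))) * P).trace
          + (S * (G k * (G k)ᵀ)).trace := by
        rw [hMdef, key, hKh, Matrix.add_mul, trace_add]
    _ = (Smat A B Q R N k * P).trace + (S * (G k * (G k)ᵀ)).trace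
          + cval A B Q R N k * ((K k - Khat A B Q R N k) * P * (K k - Khat A B Q R N k)ᵀ) 0 0 := by
        rw [hresid, hSdef, ← Smat_succ A B Q R hk]; ring
theorem telescope {n m : ℕ} (A : ℕ → Matrix (Fin n) (Fin n) ℝ)
    (B : ℕ → Matrix (Fin n) (Fin 1) ℝ) (G : ℕ → Matrix (Fin n) (Fin m) ℝ)
    (P0 : Matrix (Fin n) (Fin n) ℝ) (Q : Matrix (Fin n) (Fin n) ℝ) (R : ℕ → ℝ)
    (hQ : Q.PosSemidef) {N : ℕ} (hR : ∀ k < N, 0 < R k)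
    (K : ℕ → Matrix (Fin 1) (Fin n) ℝ) : ∀ t, t ≤ N →
    (Smat A B Q R N t * Pseq A B G P0 K t).trace + ∑ k ∈ range t, R k * ctrlVar A B G P0 K k
      = (Smat A B Q R N 0 * P0).trace
        + ∑ k ∈ range t, ((Smat A B Q R N (k + 1) * (G k * (G k)ᵀ)).trace
            + cval A B Q R N k * ((K k - Khat A B Q R N k) * Pseq A B G P0 K k
                * (K k - Khat A B Q R N k)ᵀ) 0 0) := by
  intro t
  induction t with
  | zero => intro _; simp [Pseq]
  | succ t ih =>
    intro ht
    have ht' : t < N := by omega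
    have h := step_trace A B G P0 Q R hQ hR ht' K
    have ih' := ih (by omega)
    rw [Finset.sum_range_succ, Finset.sum_range_succ]
    linarith

theorem JLQ_decomp {n m : ℕ} (A : ℕ → Matrix (Fin n) (Fin n) ℝ)
    (B : ℕ → Matrix (Fin n) (Fin 1) ℝ) (G : ℕ → Matrix (Fin n) (Fin m) ℝ)
    (P0 : Matrix (Fin n) (Fin n) ℝ) (Q : Matrix (Fin n) (Fin n) ℝ) (R : ℕ → ℝ)
    (hQ : Q.PosSemidef) {N : ℕ} (hR : ∀ k < N, 0 < R k)
    (K : ℕ → Matrix (Fin 1) (Fin n) ℝ) :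
    JLQ N A B G P0 Q R K
      = ((Smat A B Q R N 0 * P0).trace
          + ∑ k ∈ range N, (Smat A B Q R N (k + 1) * (G k * (G k)ᵀ)).trace)
        + ∑ k ∈ range N, cval A B Q R N k * ((K k - Khat A B Q R N k) * Pseq A B G P0 K k
            * (K k - Khat A B Q R N k)ᵀ) 0 0 := by
  have h := telescope A B G P0 Q R hQ hR K N le_rfl
  rw [Smat_last] at h
  rw [JLQ, h, Finset.sum_add_distrib]
  ring

theorem lagr_eq {n m : ℕ} (N Nx : ℕ) (A : ℕ → Matrix (Fin n) (Fin n) ℝ)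
    (B : ℕ → Matrix (Fin n) (Fin 1) ℝ) (G : ℕ → Matrix (Fin n) (Fin m) ℝ)
    (P0 : Matrix (Fin n) (Fin n) ℝ) (a : Fin n → ℝ) (𝓡 : ℕ → ℝ)
    (d : ℕ → Fin n → ℝ) (𝒟 𝒰 : ℕ → ℝ) (K : ℕ → Matrix (Fin 1) (Fin n) ℝ) (ξ η : ℕ → ℝ) :
    Lagr N Nx A B G P0 a 𝓡 d 𝒟 𝒰 K ξ η
      = JLQ N A B G P0 (vecMulVec a a + ∑ i ∈ range Nx, ξ i • vecMulVec (d i) (d i))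
          (fun k => 𝓡 k + η k) K
        - (∑ i ∈ range Nx, ξ i * 𝒟 i ^ 2 + ∑ k ∈ range N, η k * 𝒰 k ^ 2) := by
  have htr : ((vecMulVec a a + ∑ i ∈ range Nx, ξ i • vecMulVec (d i) (d i))
        * Pseq A B G P0 K N).trace
      = a ⬝ᵥ (Pseq A B G P0 K N) *ᵥ a
        + ∑ i ∈ range Nx, ξ i * (d i ⬝ᵥ (Pseq A B G P0 K N) *ᵥ (d i)) := by
    rw [Matrix.add_mul, trace_add, trace_vecMulVec, Finset.sum_mul, trace_sum]
    congr 1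
    refine Finset.sum_congr rfl fun i _ => ?_
    rw [Matrix.smul_mul, trace_smul, smul_eq_mul, trace_vecMulVec]
  rw [Lagr, Jcost, JLQ, htr]
  simp only [mul_sub, add_mul, Finset.sum_sub_distrib, Finset.sum_add_distrib]
  ring
/-- **Corollary 1.** If `ξ*, η* ≥ 0`, `K*` is feasible, satisfies complementary slackness with
`(ξ*, η*)`, minimizes the Lagrangian `K ↦ L(K, ξ*)` over all gain sequences, and
`R*_k = 𝓡_k + η*_k > 0` for all `k`, then with `Q* = a aᵀ + Σ_i ξ*_i d_i d_iᵀ`, the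
constrained-optimal gain `K*` attains the same LQ cost as the Riccati gains `K̂` for the weights
`(Q*, R*)`: `J_LQ(K*; Q*, R*) = J_LQ(K̂; Q*, R*) = tr(S_0 P_0) + Σ_{k<N} tr(S_{k+1} G_k G_kᵀ)`. -/
theorem corollary1_solve_via_LQ_weights {n m : ℕ} (N Nx : ℕ) (hN : 1 ≤ N)
    (A : ℕ → Matrix (Fin n) (Fin n) ℝ) (B : ℕ → Matrix (Fin n) (Fin 1) ℝ)
    (G : ℕ → Matrix (Fin n) (Fin m) ℝ) (P0 : Matrix (Fin n) (Fin n) ℝ) (hP0 : P0.PosSemidef)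
    (a : Fin n → ℝ) (𝓡 : ℕ → ℝ) (h𝓡 : ∀ k < N, 0 ≤ 𝓡 k)
    (d : ℕ → Fin n → ℝ) (𝒟 𝒰 : ℕ → ℝ) (h𝒟 : ∀ i < Nx, 0 < 𝒟 i) (h𝒰 : ∀ k < N, 0 < 𝒰 k)
    (ξs ηs : ℕ → ℝ) (hξ : ∀ i < Nx, 0 ≤ ξs i) (hη : ∀ k < N, 0 ≤ ηs k)
    (hRpos : ∀ k < N, 0 < 𝓡 k + ηs k)
    (Ks : ℕ → Matrix (Fin 1) (Fin n) ℝ)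
    (hfeas : Feasible N Nx A B G P0 d 𝒟 𝒰 Ks)
    (hslackx : ∀ i < Nx, ξs i * (d i ⬝ᵥ (Pseq A B G P0 Ks N).mulVec (d i) - 𝒟 i ^ 2) = 0)
    (hslacku : ∀ k < N, ηs k * (ctrlVar A B G P0 Ks k - 𝒰 k ^ 2) = 0)
    (hmin : ∀ K : ℕ → Matrix (Fin 1) (Fin n) ℝ,
        Lagr N Nx A B G P0 a 𝓡 d 𝒟 𝒰 Ks ξs ηs ≤ Lagr N Nx A B G P0 a 𝓡 d 𝒟 𝒰 K ξs ηs) :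
    JLQ N A B G P0 (vecMulVec a a + ∑ i ∈ range Nx, ξs i • vecMulVec (d i) (d i))
        (fun k => 𝓡 k + ηs k) Ks =
      JLQ N A B G P0 (vecMulVec a a + ∑ i ∈ range Nx, ξs i • vecMulVec (d i) (d i))
        (fun k => 𝓡 k + ηs k)
        (Khat A B (vecMulVec a a + ∑ i ∈ range Nx, ξs i • vecMulVec (d i) (d i))
          (fun k => 𝓡 k + ηs k) N) ∧
    JLQ N A B G P0 (vecMulVec a a + ∑ i ∈ range Nx, ξs i • vecMulVec (d i) (d i))
        (fun k => 𝓡 k + ηs k) Ks =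
      (Smat A B (vecMulVec a a + ∑ i ∈ range Nx, ξs i • vecMulVec (d i) (d i))
            (fun k => 𝓡 k + ηs k) N 0 * P0).trace
        + ∑ k ∈ range N,
            (Smat A B (vecMulVec a a + ∑ i ∈ range Nx, ξs i • vecMulVec (d i) (d i))
                (fun k => 𝓡 k + ηs k) N (k + 1) * (G k * (G k)ᵀ)).trace := by
  set Q : Matrix (Fin n) (Fin n) ℝ :=
    vecMulVec a a + ∑ i ∈ range Nx, ξs i • vecMulVec (d i) (d i) with hQdef
  set R : ℕ → ℝ := fun k => 𝓡 k + ηs k with hRdef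
  have hQ : Q.PosSemidef :=
    (psd_vecMulVec a).add (psd_sum _ _ fun i hi =>
      psd_smul (psd_vecMulVec (d i)) (hξ i (mem_range.mp hi)))
  have hR : ∀ k < N, 0 < R k := hRpos
  set V : ℝ := (Smat A B Q R N 0 * P0).trace
    + ∑ k ∈ range N, (Smat A B Q R N (k + 1) * (G k * (G k)ᵀ)).trace with hVdef
  have hKhat : JLQ N A B G P0 Q R (Khat A B Q R N) = V := by
    rw [JLQ_decomp A B G P0 Q R hQ hR]
    simp [sub_self]
    rfl
  have hKs_ge : V ≤ JLQ N A B G P0 Q R Ks := by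
    rw [JLQ_decomp A B G P0 Q R hQ hR]
    have hnn : 0 ≤ ∑ k ∈ range N, cval A B Q R N k
        * ((Ks k - Khat A B Q R N k) * Pseq A B G P0 Ks k
            * (Ks k - Khat A B Q R N k)ᵀ) 0 0 := by
      refine Finset.sum_nonneg fun k hk => mul_nonneg
        (le_of_lt (cval_pos A B Q R hQ hR (mem_range.mp hk))) ?_
      exact quadEntry_nonneg (Pseq_psd A B G P0 hP0 Ks k) _
    linarith
  have hle : JLQ N A B G P0 Q R Ks ≤ JLQ N A B G P0 Q R (Khat A B Q R N) := by
    have h1 := hmin (Khat A B Q R N)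
    rw [lagr_eq N Nx A B G P0 a 𝓡 d 𝒟 𝒰 Ks ξs ηs,
      lagr_eq N Nx A B G P0 a 𝓡 d 𝒟 𝒰 (Khat A B Q R N) ξs ηs] at h1
    linarith
  have hmain : JLQ N A B G P0 Q R Ks = V :=
    le_antisymm (hle.trans (le_of_eq hKhat)) hKs_ge
  exact ⟨hmain.trans hKhat.symm, hmain⟩

end
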